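/- arXiv:2507.00160 — 2 statements merged into one kernel-verified Lean document; each statement's English description precedes it below -/
import Mathlib

section
/- Let (Ω, μ) be a measure space, p a real number with p ≥ 2, and u, v, η ∈ L^p(μ) real-valued. Then the function (|u|^{p-2}u − |v|^{p-2}v)η is integrable and |∫_Ω (|u|^{p-2}u − |v|^{p-2}v) η dμ| ≤ (p − 1) ‖u − v‖_{L^p(μ)} (‖u‖_{L^p(μ)} + ‖v‖_{L^p(μ)})^{p-2} ‖η‖_{L^p(μ)}. -/
open MeasureTheory
open scoped ENNReal

/-- The `L^r(μ)` norm of a real-valued function, `‖f‖_{L^r} = (∫ |f|^r dμ)^{1/r}`. -/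
noncomputable def lpNorm {Ω : Type*} [MeasurableSpace Ω] (μ : Measure Ω) (r : ℝ)
    (f : Ω → ℝ) : ℝ :=
  (∫ x, |f x| ^ r ∂μ) ^ (1 / r)

lemma signedPow_hasDerivAt {q : ℝ} (hq : 0 ≤ q) (t : ℝ) :
    HasDerivAt (fun s : ℝ => |s| ^ q * s) ((q + 1) * |t| ^ q) t := by
  rcases eq_or_ne t 0 with rfl | ht
  · rcases hq.eq_or_lt with rfl | hq'
    · have hfun : (fun s : ℝ => |s| ^ (0 : ℝ) * s) = fun s : ℝ => s := by
        funext s; simp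
      rw [hfun]
      exact (hasDerivAt_id' (0 : ℝ)).congr_deriv (by simp)
    · have hval : (q + 1) * |(0 : ℝ)| ^ q = 0 := by
        simp [Real.zero_rpow hq'.ne']
      rw [hval, hasDerivAt_iff_tendsto_slope]
      have heq : ∀ᶠ s in nhdsWithin (0 : ℝ) {(0 : ℝ)}ᶜ,
          |s| ^ q = slope (fun s : ℝ => |s| ^ q * s) 0 s := by
        filter_upwards [self_mem_nhdsWithin] with s hs
        have hs' : (s : ℝ) ≠ 0 := hs
        simp only [slope_def_field, mul_zero, sub_zero]
        rw [mul_div_assoc, div_self hs', mul_one]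
      have hcont : Filter.Tendsto (fun s : ℝ => |s| ^ q) (nhdsWithin 0 {(0:ℝ)}ᶜ) (nhds 0) := by
        have h1 : ContinuousAt (fun s : ℝ => |s| ^ q) 0 := by
          have h2 : ContinuousAt (fun y : ℝ => y ^ q) |(0 : ℝ)| :=
            Real.continuousAt_rpow_const _ _ (Or.inr hq)
          exact h2.comp continuous_abs.continuousAt
        have := h1.tendsto
        rw [show |(0:ℝ)| ^ q = 0 by simp [Real.zero_rpow hq'.ne']] at this
        exact this.mono_left nhdsWithin_le_nhds
      exact hcont.congr' heq
  · have h1 : HasDerivAt (fun s : ℝ => |s|) ((SignType.sign t : ℝ)) t := hasDerivAt_abs ht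
    have h2 : HasDerivAt (fun y : ℝ => y ^ q) (q * |t| ^ (q - 1)) |t| :=
      Real.hasDerivAt_rpow_const (Or.inl (abs_ne_zero.mpr ht))
    have h3 : HasDerivAt (fun s : ℝ => |s| ^ q) (q * |t| ^ (q - 1) * (SignType.sign t : ℝ)) t :=
      h2.comp t h1
    have h4 := h3.mul (hasDerivAt_id t)
    refine h4.congr_deriv (Eq.symm ?_)
    have hst : (SignType.sign t : ℝ) * t = |t| := sign_mul_abs t ▸ by
      rcases lt_or_gt_of_ne ht with h | h
      · simp [h, abs_of_neg h]
      · simp [h, abs_of_pos h]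
    have habs : |t| ^ (q - 1) * |t| = |t| ^ q := by
      rw [← Real.rpow_add_one (abs_ne_zero.mpr ht)]
      ring_nf
    calc (q + 1) * |t| ^ q = q * (|t| ^ (q - 1) * |t|) + |t| ^ q := by rw [habs]; ring
      _ = q * |t| ^ (q - 1) * (SignType.sign t : ℝ) * t + |t| ^ q * 1 := by
          rw [mul_assoc (q * |t| ^ (q - 1)), hst, mul_one]; ring

lemma signedPow_sub_le {p : ℝ} (hp : 2 ≤ p) (a b : ℝ) :
    |(|a| ^ (p - 2) * a - |b| ^ (p - 2) * b)| ≤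
      (p - 1) * (|a| + |b|) ^ (p - 2) * |a - b| := by
  have hq : (0 : ℝ) ≤ p - 2 := by linarith
  have key := Convex.norm_image_sub_le_of_norm_hasDerivWithin_le
    (f := fun s : ℝ => |s| ^ (p - 2) * s)
    (f' := fun s : ℝ => ((p - 2) + 1) * |s| ^ (p - 2))
    (s := Set.uIcc a b) (C := (p - 1) * (|a| + |b|) ^ (p - 2))
    (fun x _ => (signedPow_hasDerivAt hq x).hasDerivWithinAt)
    (fun x hx => by
      have hup : x ≤ |a| + |b| := le_trans hx.2 (sup_le
        (le_trans (le_abs_self a) (le_add_of_nonneg_right (abs_nonneg b)))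
        (le_trans (le_abs_self b) (le_add_of_nonneg_left (abs_nonneg a))))
      have hlo : -(|a| + |b|) ≤ x := le_trans (le_inf
        (by linarith [neg_abs_le a, abs_nonneg b])
        (by linarith [neg_abs_le b, abs_nonneg a])) hx.1
      have hxb : |x| ≤ |a| + |b| := abs_le.mpr ⟨hlo, hup⟩
      have h1 : |x| ^ (p - 2) ≤ (|a| + |b|) ^ (p - 2) :=
        Real.rpow_le_rpow (abs_nonneg x) hxb hq
      have h2 : (0 : ℝ) ≤ ((p - 2) + 1) * |x| ^ (p - 2) := by positivity
      rw [Real.norm_eq_abs, abs_of_nonneg h2]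
      have : (p - 2) + 1 = p - 1 := by ring
      rw [this]
      have hp1 : (0 : ℝ) ≤ p - 1 := by linarith
      exact mul_le_mul_of_nonneg_left h1 hp1)
    (convex_uIcc a b) Set.right_mem_uIcc Set.left_mem_uIcc
  simpa [Real.norm_eq_abs] using key



/-- For `p ≥ 2` and `u, v, η ∈ L^p(μ)`, the function
`(|u|^{p-2}u − |v|^{p-2}v)η` is integrable and
`|∫ (|u|^{p-2}u − |v|^{p-2}v) η dμ| ≤ (p−1) ‖u−v‖_{L^p} (‖u‖_{L^p}+‖v‖_{L^p})^{p-2} ‖η‖_{L^p}`. -/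
theorem signedPower_pairing_estimate {Ω : Type*} [MeasurableSpace Ω] (μ : Measure Ω)
    (p : ℝ) (hp : 2 ≤ p) (u v η : Ω → ℝ)
    (hum : Measurable u) (hvm : Measurable v) (hηm : Measurable η)
    (hu : Integrable (fun x => |u x| ^ p) μ)
    (hv : Integrable (fun x => |v x| ^ p) μ)
    (hη : Integrable (fun x => |η x| ^ p) μ) :
    Integrable (fun x => (|u x| ^ (p - 2) * u x - |v x| ^ (p - 2) * v x) * η x) μ ∧
      |∫ x, (|u x| ^ (p - 2) * u x - |v x| ^ (p - 2) * v x) * η x ∂μ| ≤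
        (p - 1) * lpNorm μ p (fun x => u x - v x) *
          (lpNorm μ p u + lpNorm μ p v) ^ (p - 2) * lpNorm μ p η := by
  have hp0 : (0 : ℝ) < p := by linarith
  have hp1 : (1 : ℝ) ≤ p := by linarith
  have hq : (0 : ℝ) ≤ p - 2 := by linarith
  set F : Ω → ℝ := fun x => |u x| ^ (p - 2) * u x - |v x| ^ (p - 2) * v x with hF
  have hFm : Measurable F :=
    ((hum.abs.pow measurable_const).mul hum).sub ((hvm.abs.pow measurable_const).mul hvm)
  have hFηm : Measurable (fun x => F x * η x) := hFm.mul hηm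
  set aa : Ω → ℝ≥0∞ := fun x => ENNReal.ofReal |u x - v x| with haa
  set bb : Ω → ℝ≥0∞ := fun x => ENNReal.ofReal (|u x| + |v x|) with hbb
  set cc : Ω → ℝ≥0∞ := fun x => ENNReal.ofReal |η x| with hcc
  have haam : Measurable aa := (hum.sub hvm).abs.ennreal_ofReal
  have hbbm : Measurable bb := (hum.abs.add hvm.abs).ennreal_ofReal
  have hccm : Measurable cc := hηm.abs.ennreal_ofReal
  set A := ∫⁻ x, aa x ^ p ∂μ with hA
  set B := ∫⁻ x, bb x ^ p ∂μ with hB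
  set C := ∫⁻ x, cc x ^ p ∂μ with hC
  have hfin : ∀ g : Ω → ℝ, Measurable g → Integrable (fun x => |g x| ^ p) μ →
      ∫⁻ x, ENNReal.ofReal |g x| ^ p ∂μ < ⊤ := by
    intro g hgm hgi
    have heq : ∀ x, ENNReal.ofReal |g x| ^ p = ENNReal.ofReal (|g x| ^ p) := fun x =>
      ENNReal.ofReal_rpow_of_nonneg (abs_nonneg _) hp0.le
    simp_rw [heq]
    exact (hasFiniteIntegral_iff_ofReal
      (Filter.Eventually.of_forall fun x => by positivity)).mp hgi.hasFiniteIntegral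
  have hIu := hfin u hum hu
  have hIv := hfin v hvm hv
  have hIη := hfin η hηm hη
  -- Minkowski
  have hBeq : B = ∫⁻ x,
      ((fun x => ENNReal.ofReal |u x|) + fun x => ENNReal.ofReal |v x|) x ^ p ∂μ :=
    lintegral_congr fun x => by
      simp [bb, ENNReal.ofReal_add (abs_nonneg (u x)) (abs_nonneg (v x))]
  have hmink : B ^ (1 / p) ≤ (∫⁻ x, ENNReal.ofReal |u x| ^ p ∂μ) ^ (1 / p) +
      (∫⁻ x, ENNReal.ofReal |v x| ^ p ∂μ) ^ (1 / p) := by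
    rw [hBeq]
    exact ENNReal.lintegral_Lp_add_le hum.abs.ennreal_ofReal.aemeasurable
      hvm.abs.ennreal_ofReal.aemeasurable hp1
  have hsumfin : (∫⁻ x, ENNReal.ofReal |u x| ^ p ∂μ) ^ (1 / p) +
      (∫⁻ x, ENNReal.ofReal |v x| ^ p ∂μ) ^ (1 / p) < ⊤ :=
    ENNReal.add_lt_top.mpr ⟨ENNReal.rpow_lt_top_of_nonneg (by positivity) hIu.ne,
      ENNReal.rpow_lt_top_of_nonneg (by positivity) hIv.ne⟩
  have hB1 : B ^ (1 / p) < ⊤ := lt_of_le_of_lt hmink hsumfin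
  have hBfin : B < ⊤ := by
    have : B = (B ^ (1 / p)) ^ p := by
      rw [← ENNReal.rpow_mul, one_div_mul_cancel hp0.ne', ENNReal.rpow_one]
    rw [this]
    exact ENNReal.rpow_lt_top_of_nonneg hp0.le hB1.ne
  have hAfin : A < ⊤ := by
    refine lt_of_le_of_lt (lintegral_mono fun x => ?_) hBfin
    exact ENNReal.rpow_le_rpow (ENNReal.ofReal_le_ofReal (abs_sub (u x) (v x))) hp0.le
  -- pointwise bound
  have hpt : ∀ x, ENNReal.ofReal |F x * η x| ≤
      ENNReal.ofReal (p - 1) * (aa x * bb x ^ (p - 2) * cc x) := by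
    intro x
    have h2 := signedPow_sub_le hp (u x) (v x)
    have h3 : |F x * η x| ≤ (p - 1) * (|u x| + |v x|) ^ (p - 2) * |u x - v x| * |η x| := by
      rw [abs_mul]
      exact mul_le_mul_of_nonneg_right h2 (abs_nonneg _)
    refine le_trans (ENNReal.ofReal_le_ofReal h3) (le_of_eq ?_)
    have h0 : (0:ℝ) ≤ p - 1 := by linarith
    have hw : (0:ℝ) ≤ (|u x| + |v x|) ^ (p - 2) := Real.rpow_nonneg (by positivity) _
    rw [ENNReal.ofReal_mul (mul_nonneg (mul_nonneg h0 hw) (abs_nonneg _)),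
      ENNReal.ofReal_mul (mul_nonneg h0 hw),
      ENNReal.ofReal_mul h0,
      ← ENNReal.ofReal_rpow_of_nonneg (by positivity) hq]
    ring
  -- Hölder (three factors)
  have holder : ∫⁻ x, aa x * bb x ^ (p - 2) * cc x ∂μ ≤
      A ^ (1 / p) * B ^ ((p - 2) / p) * C ^ (1 / p) := by
    have hmain := ENNReal.lintegral_prod_norm_pow_le (μ := μ) (Finset.univ : Finset (Fin 3))
      (f := ![fun x => aa x ^ p, fun x => bb x ^ p, fun x => cc x ^ p])
      (p := ![1 / p, (p - 2) / p, 1 / p])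
      (by
        intro i _
        fin_cases i
        · exact (haam.pow measurable_const).aemeasurable
        · exact (hbbm.pow measurable_const).aemeasurable
        · exact (hccm.pow measurable_const).aemeasurable)
      (by
        simp only [Fin.sum_univ_three, Matrix.cons_val_zero, Matrix.cons_val_one,
          Matrix.head_cons, Matrix.cons_val_two, Matrix.tail_cons]
        field_simp
        ring)
      (by
        intro i _
        fin_cases i
        · exact one_div_nonneg.mpr hp0.le
        · exact div_nonneg hq hp0.le
        · exact one_div_nonneg.mpr hp0.le)
    simp only [Fin.prod_univ_three, Matrix.cons_val_zero, Matrix.cons_val_one,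
      Matrix.head_cons, Matrix.cons_val_two, Matrix.tail_cons] at hmain
    have e1 : ∀ z : ℝ≥0∞, (z ^ p) ^ (1 / p) = z := fun z => by
      rw [← ENNReal.rpow_mul, mul_one_div_cancel hp0.ne', ENNReal.rpow_one]
    have e2 : ∀ z : ℝ≥0∞, (z ^ p) ^ ((p - 2) / p) = z ^ (p - 2) := fun z => by
      rw [← ENNReal.rpow_mul]
      congr 1
      field_simp
    calc ∫⁻ x, aa x * bb x ^ (p - 2) * cc x ∂μ
        = ∫⁻ x, (aa x ^ p) ^ (1 / p) * (bb x ^ p) ^ ((p - 2) / p) * (cc x ^ p) ^ (1 / p) ∂μ := by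
          simp_rw [e1, e2]
      _ ≤ A ^ (1 / p) * B ^ ((p - 2) / p) * C ^ (1 / p) := hmain
  -- main lintegral bound
  have hkey : ∫⁻ x, ENNReal.ofReal |F x * η x| ∂μ ≤
      ENNReal.ofReal (p - 1) * (A ^ (1 / p) * B ^ ((p - 2) / p) * C ^ (1 / p)) :=
    calc ∫⁻ x, ENNReal.ofReal |F x * η x| ∂μ
        ≤ ∫⁻ x, ENNReal.ofReal (p - 1) * (aa x * bb x ^ (p - 2) * cc x) ∂μ :=
          lintegral_mono hpt
      _ = ENNReal.ofReal (p - 1) * ∫⁻ x, aa x * bb x ^ (p - 2) * cc x ∂μ :=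
          lintegral_const_mul' _ _ ENNReal.ofReal_ne_top
      _ ≤ _ := mul_le_mul_right holder _
  have hRfin : ENNReal.ofReal (p - 1) * (A ^ (1 / p) * B ^ ((p - 2) / p) * C ^ (1 / p)) < ⊤ :=
    ENNReal.mul_lt_top ENNReal.ofReal_lt_top
      (ENNReal.mul_lt_top
        (ENNReal.mul_lt_top (ENNReal.rpow_lt_top_of_nonneg (by positivity) hAfin.ne)
          (ENNReal.rpow_lt_top_of_nonneg (by positivity) hBfin.ne))
        (ENNReal.rpow_lt_top_of_nonneg (by positivity) hIη.ne))
  have hInt : Integrable (fun x => F x * η x) μ := by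
    refine ⟨hFηm.aestronglyMeasurable, ?_⟩
    rw [hasFiniteIntegral_iff_norm]
    simp_rw [Real.norm_eq_abs]
    exact lt_of_le_of_lt hkey hRfin
  -- lpNorm conversion
  have lp_eq : ∀ g : Ω → ℝ, Measurable g →
      lpNorm μ p g = ((∫⁻ x, ENNReal.ofReal |g x| ^ p ∂μ) ^ (1 / p)).toReal := by
    intro g hgm
    have h1 : ∫ x, |g x| ^ p ∂μ = (∫⁻ x, ENNReal.ofReal (|g x| ^ p) ∂μ).toReal :=
      integral_eq_lintegral_of_nonneg_ae (Filter.Eventually.of_forall fun x => by positivity)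
        (hgm.abs.pow measurable_const).aestronglyMeasurable
    rw [_root_.lpNorm, h1]
    simp_rw [← ENNReal.ofReal_rpow_of_nonneg (abs_nonneg _) hp0.le]
    rw [ENNReal.toReal_rpow]
  refine ⟨hInt, ?_⟩
  have h5 : |∫ x, F x * η x ∂μ| ≤ ∫ x, |F x * η x| ∂μ := by
    have := norm_integral_le_integral_norm (μ := μ) fun x => F x * η x
    simpa only [Real.norm_eq_abs] using this
  have h6 : ∫ x, |F x * η x| ∂μ = (∫⁻ x, ENNReal.ofReal |F x * η x| ∂μ).toReal :=
    integral_eq_lintegral_of_nonneg_ae (Filter.Eventually.of_forall fun x => abs_nonneg _)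
      hFηm.abs.aestronglyMeasurable
  have h7 := ENNReal.toReal_mono hRfin.ne hkey
  have hALP : (A ^ (1 / p)).toReal = lpNorm μ p (fun x => u x - v x) :=
    (lp_eq (fun x => u x - v x) (hum.sub hvm)).symm
  have hCLP : (C ^ (1 / p)).toReal = lpNorm μ p η := (lp_eq η hηm).symm
  have hBle : (B ^ (1 / p)).toReal ≤ lpNorm μ p u + lpNorm μ p v := by
    have h8 := ENNReal.toReal_mono hsumfin.ne hmink
    rw [ENNReal.toReal_add (ENNReal.rpow_lt_top_of_nonneg (by positivity) hIu.ne).ne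
      (ENNReal.rpow_lt_top_of_nonneg (by positivity) hIv.ne).ne] at h8
    rw [lp_eq u hum, lp_eq v hvm]
    exact h8
  have hBsplit : (B ^ ((p - 2) / p)).toReal = ((B ^ (1 / p)).toReal) ^ (p - 2) := by
    rw [ENNReal.toReal_rpow]
    congr 1
    rw [← ENNReal.rpow_mul]
    congr 1
    field_simp
  have hRHS : (ENNReal.ofReal (p - 1) * (A ^ (1 / p) * B ^ ((p - 2) / p) * C ^ (1 / p))).toReal
      = (p - 1) * ((A ^ (1 / p)).toReal * ((B ^ (1 / p)).toReal) ^ (p - 2) *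
        (C ^ (1 / p)).toReal) := by
    rw [ENNReal.toReal_mul, ENNReal.toReal_mul, ENNReal.toReal_mul,
      ENNReal.toReal_ofReal (by linarith), hBsplit]
  calc |∫ x, F x * η x ∂μ| ≤ ∫ x, |F x * η x| ∂μ := h5
    _ = (∫⁻ x, ENNReal.ofReal |F x * η x| ∂μ).toReal := h6
    _ ≤ (ENNReal.ofReal (p - 1) * (A ^ (1 / p) * B ^ ((p - 2) / p) * C ^ (1 / p))).toReal := h7
    _ = (p - 1) * ((A ^ (1 / p)).toReal * ((B ^ (1 / p)).toReal) ^ (p - 2) *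
        (C ^ (1 / p)).toReal) := hRHS
    _ = (p - 1) * (A ^ (1 / p)).toReal * ((B ^ (1 / p)).toReal) ^ (p - 2) *
        (C ^ (1 / p)).toReal := by ring
    _ ≤ (p - 1) * (A ^ (1 / p)).toReal * (lpNorm μ p u + lpNorm μ p v) ^ (p - 2) *
        (C ^ (1 / p)).toReal := by
        have hpow : ((B ^ (1 / p)).toReal) ^ (p - 2) ≤
            (lpNorm μ p u + lpNorm μ p v) ^ (p - 2) :=
          Real.rpow_le_rpow ENNReal.toReal_nonneg hBle hq
        refine mul_le_mul_of_nonneg_right ?_ ENNReal.toReal_nonneg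
        exact mul_le_mul_of_nonneg_left hpow
          (mul_nonneg (by linarith) ENNReal.toReal_nonneg)
    _ = (p - 1) * lpNorm μ p (fun x => u x - v x) *
          (lpNorm μ p u + lpNorm μ p v) ^ (p - 2) * lpNorm μ p η := by
        rw [hALP, hCLP]
end

section
/- Let p be a real number with p ≥ 2, d ≥ 1, and let u : ℝ^d → ℝ be twice continuously differentiable with compact support. Then ∫_{ℝ^d} (−Δu(x) + |u(x)|^{p-2}u(x))^2 dx = ∫_{ℝ^d} (Δu(x))^2 dx + ∫_{ℝ^d} |u(x)|^{2p-2} dx + 2(p − 1) ∫_{ℝ^d} |u(x)|^{p-2} |∇u(x)|^2 dx. -/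
open MeasureTheory

/-- The Laplacian `Δu(x) = ∑ i, ∂²u/∂x_i²(x)` as the sum of second partial derivatives. -/
noncomputable def lap {d : ℕ} (u : EuclideanSpace ℝ (Fin d) → ℝ)
    (x : EuclideanSpace ℝ (Fin d)) : ℝ :=
  ∑ i : Fin d, fderiv ℝ (fun y => fderiv ℝ u y (EuclideanSpace.single i (1 : ℝ))) x
    (EuclideanSpace.single i (1 : ℝ))

section auxiliary

set_option linter.unusedSectionVars false
set_option linter.unusedVariables false


lemma hasDerivAt_signedPow {p : ℝ} (hp : 2 ≤ p) (s : ℝ) :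
    HasDerivAt (fun t : ℝ => |t| ^ (p - 2) * t) ((p - 1) * |s| ^ (p - 2)) s := by
  rcases lt_trichotomy s 0 with hs | hs | hs
  · have h1 : HasDerivAt (fun t : ℝ => -((-t) ^ (p - 1))) ((p - 1) * |s| ^ (p - 2)) s := by
      have hneg : HasDerivAt (fun t : ℝ => -t) (-1 : ℝ) s := (hasDerivAt_id s).neg
      have h2 := ((Real.hasDerivAt_rpow_const (x := -s) (p := p - 1)
        (Or.inl (by linarith))).comp s hneg).neg
      refine h2.congr_deriv ?_
      rw [abs_of_neg hs, show p - 1 - 1 = p - 2 by ring]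
      ring
    apply h1.congr_of_eventuallyEq
    filter_upwards [eventually_nhds_iff.2 ⟨Set.Iio 0, fun t ht => ht, isOpen_Iio, hs⟩] with t ht
    have h0 : (0:ℝ) < -t := by simpa using ht
    rw [abs_of_neg ht, show p - 1 = p - 2 + 1 by ring, Real.rpow_add h0, Real.rpow_one]
    ring
  · -- s = 0
    subst hs
    rcases eq_or_lt_of_le hp with hp2 | hp2
    · have : (fun t : ℝ => |t| ^ (p - 2) * t) = fun t => t := by
        funext t; rw [← hp2]; simp
      rw [this]
      have h := hasDerivAt_id (0:ℝ)
      refine h.congr_deriv ?_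
      rw [← hp2]
      norm_num
    · have hpne : p - 2 ≠ 0 := by linarith
      have hcont0 : ContinuousAt (fun t : ℝ => |t| ^ (p - 2)) 0 := by
        have h1 : ContinuousAt (fun x : ℝ => x ^ (p - 2)) (|(0:ℝ)|) := by
          simpa using Real.continuousAt_rpow_const 0 (p - 2) (Or.inr (by linarith))
        exact h1.comp continuous_abs.continuousAt
      have key : HasDerivAt (fun t : ℝ => |t| ^ (p - 2) * t) 0 0 := by
        rw [hasDerivAt_iff_tendsto_slope]
        have heq : (slope (fun t : ℝ => |t| ^ (p - 2) * t) 0) =ᶠ[nhdsWithin 0 {(0:ℝ)}ᶜ]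
            fun t => |t| ^ (p - 2) := by
          filter_upwards [self_mem_nhdsWithin] with t ht
          have ht' : t ≠ 0 := ht
          simp only [slope, vsub_eq_sub, sub_zero, smul_eq_mul]
          field_simp
          simp
        have hcont : Filter.Tendsto (fun t : ℝ => |t| ^ (p - 2))
            (nhdsWithin 0 {(0:ℝ)}ᶜ) (nhds 0) := by
          have h2 := (hcont0.continuousWithinAt (s := {(0:ℝ)}ᶜ)).tendsto
          simpa [Real.zero_rpow hpne] using h2
        exact hcont.congr' heq.symm
      convert key using 1
      rw [abs_zero, Real.zero_rpow hpne]
      ring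
  · have h1 : HasDerivAt (fun t : ℝ => t ^ (p - 1)) ((p - 1) * |s| ^ (p - 2)) s := by
      have := Real.hasDerivAt_rpow_const (x := s) (p := p - 1) (Or.inl (ne_of_gt hs))
      convert this using 1
      rw [abs_of_pos hs, show p - 1 - 1 = p - 2 by ring]
    apply h1.congr_of_eventuallyEq
    filter_upwards [eventually_nhds_iff.2 ⟨Set.Ioi 0, fun t ht => ht, isOpen_Ioi, hs⟩] with t ht
    have h0 : (0:ℝ) < t := ht
    rw [abs_of_pos ht, show p - 1 = p - 2 + 1 by ring, Real.rpow_add h0, Real.rpow_one]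

section grad

variable {d : ℕ}

lemma norm_gradient_sq (u : EuclideanSpace ℝ (Fin d) → ℝ) (x : EuclideanSpace ℝ (Fin d)) :
    ‖gradient u x‖ ^ 2 = ∑ i : Fin d, (fderiv ℝ u x (EuclideanSpace.single i (1:ℝ)))^2 := by
  have h1 : ∀ i : Fin d, fderiv ℝ u x (EuclideanSpace.single i (1:ℝ)) = gradient u x i := by
    intro i
    have : fderiv ℝ u x = InnerProductSpace.toDual ℝ _ (gradient u x) := by
      simp [gradient]
    rw [this, InnerProductSpace.toDual_apply_apply, EuclideanSpace.inner_single_right]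
    simp
  rw [← real_inner_self_eq_norm_sq, PiLp.inner_apply]
  simp only [h1, RCLike.inner_apply, conj_trivial]
  congr 1; funext i; ring
end grad


lemma hasCompactSupport_finsetSum {α ι : Type*} [TopologicalSpace α] {s : Finset ι}
    {f : ι → α → ℝ} (h : ∀ i ∈ s, HasCompactSupport (f i)) :
    HasCompactSupport (fun x => ∑ i ∈ s, f i x) := by
  classical
  induction s using Finset.induction with
  | empty => simp only [Finset.sum_empty]; exact HasCompactSupport.zero
  | insert _ _ hi ih =>
    simp only [Finset.sum_insert hi]
    exact (h _ (Finset.mem_insert_self _ _)).add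
      (ih fun i his => h i (Finset.mem_insert_of_mem his))

lemma sq_signedPow {p : ℝ} (hp : 2 ≤ p) (s : ℝ) :
    (|s| ^ (p - 2) * s) ^ 2 = |s| ^ (2 * p - 2) := by
  rcases eq_or_ne s 0 with rfl | hs
  · rw [abs_zero, Real.zero_rpow (by linarith : 2 * p - 2 ≠ 0)]
    simp
  · have h0 : 0 < |s| := abs_pos.2 hs
    rw [mul_pow, ← Real.rpow_natCast (|s| ^ (p - 2)) 2, ← Real.rpow_mul (le_of_lt h0),
      ← sq_abs s, ← Real.rpow_natCast |s| 2, ← Real.rpow_add h0]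
    norm_num
    ring_nf


section aux
variable {p : ℝ} {d : ℕ}

lemma cont_abs_rpow (hp : 2 ≤ p) : Continuous (fun s : ℝ => |s| ^ (p - 2)) :=
  continuous_abs.rpow_const (fun _ => Or.inr (by linarith))

variable (u : EuclideanSpace ℝ (Fin d) → ℝ) (hu : ContDiff ℝ 2 u) (hsupp : HasCompactSupport u)

section
include hu

lemma u_diff : Differentiable ℝ u := hu.differentiable (by norm_num)

lemma g_contDiff (i : Fin d) :
    ContDiff ℝ 1 (fun x => fderiv ℝ u x (EuclideanSpace.single i (1:ℝ))) :=
  (hu.fderiv_right (by norm_num)).clm_apply contDiff_const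

lemma h2_cont (i : Fin d) :
    Continuous (fun x => fderiv ℝ (fun y => fderiv ℝ u y (EuclideanSpace.single i (1:ℝ))) x
      (EuclideanSpace.single i (1:ℝ))) :=
  ((((g_contDiff u hu i).fderiv_right (m := 0) (by norm_num)).clm_apply contDiff_const).continuous)

end

section
include hsupp

lemma g_supp (i : Fin d) :
    HasCompactSupport (fun x => fderiv ℝ u x (EuclideanSpace.single i (1:ℝ))) :=
  hsupp.fderiv_apply ℝ (EuclideanSpace.single i (1:ℝ))

lemma h2_supp (i : Fin d) :
    HasCompactSupport (fun x => fderiv ℝ (fun y => fderiv ℝ u y (EuclideanSpace.single i (1:ℝ))) x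
      (EuclideanSpace.single i (1:ℝ))) :=
  (g_supp u hsupp i).fderiv_apply ℝ (EuclideanSpace.single i (1:ℝ))

end

include hu hsupp

lemma Fu_diff (hp : 2 ≤ p) :
    ∀ x, HasFDerivAt (fun x => |u x| ^ (p - 2) * u x)
      (((p - 1) * |u x| ^ (p - 2)) • fderiv ℝ u x) x := fun x =>
  (hasDerivAt_signedPow hp (u x)).comp_hasFDerivAt x (u_diff u hu x).hasFDerivAt

lemma Fu_cont (hp : 2 ≤ p) : Continuous (fun x => |u x| ^ (p - 2) * u x) :=
  ((cont_abs_rpow hp).comp hu.continuous).mul hu.continuous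

lemma Fu_supp (hp : 2 ≤ p) : HasCompactSupport (fun x => |u x| ^ (p - 2) * u x) :=
  hsupp.comp_left (g := fun s => |s| ^ (p - 2) * s) (by simp)

end aux

section main
variable {p : ℝ} {d : ℕ} (u : EuclideanSpace ℝ (Fin d) → ℝ)

lemma integrable_cc {f : EuclideanSpace ℝ (Fin d) → ℝ} (hc : Continuous f)
    (hs : HasCompactSupport f) : Integrable f := hc.integrable_of_hasCompactSupport hs

lemma ibp_coord (hp : 2 ≤ p) (hu : ContDiff ℝ 2 u) (hsupp : HasCompactSupport u) (i : Fin d) :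
    ∫ x, fderiv ℝ (fun y => fderiv ℝ u y (EuclideanSpace.single i (1:ℝ))) x
        (EuclideanSpace.single i (1:ℝ)) * (|u x| ^ (p - 2) * u x) =
      - ∫ x, (p - 1) * |u x| ^ (p - 2) *
        (fderiv ℝ u x (EuclideanSpace.single i (1:ℝ)))^2 := by
  set e := EuclideanSpace.single i (1:ℝ)
  set g : EuclideanSpace ℝ (Fin d) → ℝ := fun x => fderiv ℝ u x e with hg
  set Fu : EuclideanSpace ℝ (Fin d) → ℝ := fun x => |u x| ^ (p - 2) * u x with hFu
  have hder : ∀ x, fderiv ℝ Fu x e = (p - 1) * |u x| ^ (p - 2) * g x := by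
    intro x
    rw [(Fu_diff u hu hsupp hp x).fderiv]
    simp [g, mul_assoc]
  have hgc : Continuous g := (g_contDiff u hu i).continuous
  have hgs : HasCompactSupport g := g_supp u hsupp i
  have hFuc : Continuous Fu := Fu_cont u hu hsupp hp
  have hFus : HasCompactSupport Fu := Fu_supp u hu hsupp hp
  have h1 : Integrable (fun x => fderiv ℝ Fu x e * g x) := by
    apply integrable_cc
    · have : Continuous (fun x => ((p - 1) * |u x| ^ (p - 2) * g x) * g x) :=
        ((continuous_const.mul ((cont_abs_rpow hp).comp hu.continuous)).mul hgc).mul hgc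
      exact this.congr fun x => by rw [hder x]
    · apply hgs.mono
      intro x hx
      simp only [Function.mem_support] at hx ⊢
      intro h0
      apply hx
      rw [hder x, h0, mul_zero]
  have h2 : Integrable (fun x => Fu x * fderiv ℝ g x e) := by
    apply integrable_cc
    · exact hFuc.mul (h2_cont u hu i)
    · exact hFus.mul_right
  have h3 : Integrable (fun x => Fu x * g x) :=
    integrable_cc (hFuc.mul hgc) hFus.mul_right
  have hdf : Differentiable ℝ Fu := fun x => (Fu_diff u hu hsupp hp x).differentiableAt
  have hdg : Differentiable ℝ g := (g_contDiff u hu i).differentiable (by norm_num)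
  have := integral_mul_fderiv_eq_neg_fderiv_mul_of_integrable h1 h2 h3 (fun x _ => hdf x) (fun x _ => hdg x) (v := e)
  calc ∫ x, fderiv ℝ (fun y => fderiv ℝ u y e) x e * Fu x
      = ∫ x, Fu x * fderiv ℝ g x e := by congr 1; funext x; rw [mul_comm]
    _ = - ∫ x, fderiv ℝ Fu x e * g x := this
    _ = - ∫ x, (p - 1) * |u x| ^ (p - 2) * g x ^ 2 := by
        congr 1; apply integral_congr_ae; filter_upwards with x
        rw [hder x]; ring

end main

end auxiliary

/-- For `p ≥ 2`, `d ≥ 1` and `u : ℝ^d → ℝ` twice continuously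
differentiable with compact support,
`∫ (−Δu + |u|^{p-2}u)² dx = ∫ (Δu)² dx + ∫ |u|^{2p-2} dx + 2(p−1) ∫ |u|^{p-2} |∇u|² dx`. -/
theorem energy_gradient_L2_expansion (p : ℝ) (hp : 2 ≤ p)
    (d : ℕ) (hd : 1 ≤ d) (u : EuclideanSpace ℝ (Fin d) → ℝ)
    (hu : ContDiff ℝ 2 u) (hsupp : HasCompactSupport u) :
    ∫ x, (-lap u x + |u x| ^ (p - 2) * u x) ^ 2 =
      (∫ x, (lap u x) ^ 2) + (∫ x, |u x| ^ (2 * p - 2)) +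
        2 * (p - 1) * ∫ x, |u x| ^ (p - 2) * ‖gradient u x‖ ^ 2 := by
  have hlap_cont : Continuous (lap u) := by
    unfold lap
    exact continuous_finset_sum _ fun i _ => h2_cont u hu i
  have hlap_supp : HasCompactSupport (lap u) := by
    unfold lap
    exact hasCompactSupport_finsetSum fun i _ => h2_supp u hsupp i
  have hFuc : Continuous (fun x => |u x| ^ (p - 2) * u x) := Fu_cont u hu hsupp hp
  have hFus : HasCompactSupport (fun x => |u x| ^ (p - 2) * u x) := Fu_supp u hu hsupp hp
  have hI_L2 : Integrable (fun x => (lap u x) ^ 2) :=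
    integrable_cc (hlap_cont.pow 2) (hlap_supp.comp_left (g := fun t : ℝ => t ^ 2) (by simp))
  have hI_Fu2 : Integrable (fun x => (|u x| ^ (p - 2) * u x) ^ 2) :=
    integrable_cc (hFuc.pow 2) (hFus.comp_left (g := fun t : ℝ => t ^ 2) (by simp))
  have hI_cross : Integrable (fun x => lap u x * (|u x| ^ (p - 2) * u x)) :=
    integrable_cc (hlap_cont.mul hFuc) hlap_supp.mul_right
  -- key: cross term
  have hkey : ∫ x, lap u x * (|u x| ^ (p - 2) * u x) =
      -((p - 1) * ∫ x, |u x| ^ (p - 2) * ‖gradient u x‖ ^ 2) := by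
    have step1 : ∫ x, lap u x * (|u x| ^ (p - 2) * u x) =
        ∑ i : Fin d, ∫ x, fderiv ℝ (fun y => fderiv ℝ u y (EuclideanSpace.single i (1:ℝ))) x
          (EuclideanSpace.single i (1:ℝ)) * (|u x| ^ (p - 2) * u x) := by
      rw [← integral_finset_sum]
      · congr 1; funext x; rw [lap, Finset.sum_mul]
      · intro i _
        exact integrable_cc ((h2_cont u hu i).mul hFuc) ((h2_supp u hsupp i).mul_right)
    rw [step1]
    have step2 : ∀ i : Fin d,
        ∫ x, fderiv ℝ (fun y => fderiv ℝ u y (EuclideanSpace.single i (1:ℝ))) x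
          (EuclideanSpace.single i (1:ℝ)) * (|u x| ^ (p - 2) * u x) =
        - ∫ x, (p - 1) * |u x| ^ (p - 2) *
          (fderiv ℝ u x (EuclideanSpace.single i (1:ℝ)))^2 := ibp_coord u hp hu hsupp
    rw [Finset.sum_congr rfl fun i _ => step2 i, Finset.sum_neg_distrib, ← integral_finset_sum]
    · congr 1
      rw [← integral_const_mul _ _]
      congr 1; funext x
      simp only [norm_gradient_sq u x, Finset.mul_sum]
      exact Finset.sum_congr rfl fun i _ => by ring
    · intro i _
      apply integrable_cc
      · exact (continuous_const.mul ((cont_abs_rpow hp).comp hu.continuous)).mul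
          (((g_contDiff u hu i).continuous).pow 2)
      · apply (g_supp u hsupp i).mono
        intro x hx
        simp only [Function.mem_support] at hx ⊢
        intro h0; apply hx; rw [h0]; ring
  -- expand the square
  have expand : ∫ x, (-lap u x + |u x| ^ (p - 2) * u x) ^ 2 =
      (∫ x, (lap u x) ^ 2) + (∫ x, (|u x| ^ (p - 2) * u x) ^ 2) -
        2 * ∫ x, lap u x * (|u x| ^ (p - 2) * u x) := by
    have : (fun x => (-lap u x + |u x| ^ (p - 2) * u x) ^ 2) =
        fun x => ((lap u x) ^ 2 + (|u x| ^ (p - 2) * u x) ^ 2) -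
          2 * (lap u x * (|u x| ^ (p - 2) * u x)) := by
      funext x; ring
    have hadd : Integrable (fun x => (lap u x) ^ 2 + (|u x| ^ (p - 2) * u x) ^ 2) :=
      hI_L2.add hI_Fu2
    have hmul : Integrable (fun x => 2 * (lap u x * (|u x| ^ (p - 2) * u x))) :=
      hI_cross.const_mul 2
    rw [this, integral_sub hadd hmul, integral_add hI_L2 hI_Fu2, integral_const_mul _ _]
  have hFu2 : ∫ x, (|u x| ^ (p - 2) * u x) ^ 2 = ∫ x, |u x| ^ (2 * p - 2) := by
    congr 1; funext x; exact sq_signedPow hp (u x)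
  rw [expand, hFu2, hkey]
  ring
end
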